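/- Let p ≥ 5 be a prime. Then the rational number ∏_{j=1}^{(p−1)/2} (1 − p²/(4j²)) is congruent to 1 modulo p³, i.e., its p-adic valuation of (product − 1) is at least 3. -/

import Mathlib

open Finset

lemma zmod_sq_inv_sum (p : ℕ) [hp : Fact p.Prime] (hp5 : 5 ≤ p) :
    ∑ j ∈ Finset.Icc 1 ((p - 1) / 2), (((4 * j ^ 2 : ℕ) : ZMod p))⁻¹ = 0 := by
  have hodd : p % 2 = 1 := Nat.odd_iff.mp (hp.out.odd_of_ne_two (by omega))
  set m := (p - 1) / 2 with hm
  have hm2 : 2 * m = p - 1 := by omega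
  have cast_eq : ∀ j : ℕ, ((4 * j ^ 2 : ℕ) : ZMod p) = 4 * (j : ZMod p) ^ 2 := by
    intro j; push_cast; ring
  -- reflection symmetry
  have refl_eq : ∀ j, 1 ≤ j → j ≤ m → (((4 * (p - j) ^ 2 : ℕ) : ZMod p))⁻¹
      = (((4 * j ^ 2 : ℕ) : ZMod p))⁻¹ := by
    intro j h1 h2
    rw [cast_eq, cast_eq]
    congr 1
    have hneg : ((p - j : ℕ) : ZMod p) = -(j : ZMod p) := by
      have hadd : (p - j : ℕ) + j = p := by omega
      have h2' : (((p - j) + j : ℕ) : ZMod p) = 0 := by rw [hadd, ZMod.natCast_self]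
      push_cast at h2'
      linear_combination h2'
    rw [hneg]; ring
  have split : ∑ j ∈ Finset.Icc 1 (p - 1), (((4 * j ^ 2 : ℕ) : ZMod p))⁻¹
      = 2 * ∑ j ∈ Finset.Icc 1 m, (((4 * j ^ 2 : ℕ) : ZMod p))⁻¹ := by
    have hIoc : ∀ n : ℕ, Finset.Icc 1 n = Finset.Ioc 0 n := by
      intro n; rw [← Finset.Icc_add_one_left_eq_Ioc, zero_add]
    rw [hIoc, hIoc, ← Finset.sum_Ioc_consecutive _ (Nat.zero_le m) (by omega : m ≤ p - 1)]
    have hrefl : ∑ j ∈ Finset.Ioc m (p - 1), (((4 * j ^ 2 : ℕ) : ZMod p))⁻¹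
        = ∑ j ∈ Finset.Ioc 0 m, (((4 * j ^ 2 : ℕ) : ZMod p))⁻¹ := by
      apply Finset.sum_nbij' (fun j => p - j) (fun j => p - j)
      · intro a ha; simp only [Finset.mem_Ioc] at ha ⊢; omega
      · intro a ha; simp only [Finset.mem_Ioc] at ha ⊢; omega
      · intro a ha; simp only [Finset.mem_Ioc] at ha; omega
      · intro a ha; simp only [Finset.mem_Ioc] at ha; omega
      · intro a ha
        simp only [Finset.mem_Ioc] at ha
        have h := refl_eq (p - a) (by omega) (by omega)
        rw [show p - (p - a) = a by omega] at h
        exact h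
    rw [hrefl]; ring
  have tofield : ∑ j ∈ Finset.Icc 1 (p - 1), (((4 * j ^ 2 : ℕ) : ZMod p))⁻¹
      = ∑ x ∈ (Finset.univ.erase (0 : ZMod p)), (4 * x ^ 2)⁻¹ := by
    refine Finset.sum_nbij' (fun j => ((j : ZMod p))) (fun x => ZMod.val x) ?_ ?_ ?_ ?_ ?_
    · intro a ha
      simp only [Finset.mem_Icc] at ha
      simp only [Finset.mem_erase, Finset.mem_univ, and_true]
      rw [Ne, ZMod.natCast_eq_zero_iff]
      intro hdvd
      have := Nat.le_of_dvd (by omega) hdvd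
      omega
    · intro x hx
      simp only [Finset.mem_erase, Finset.mem_univ, and_true] at hx
      simp only [Finset.mem_Icc]
      have h1 : x.val ≠ 0 := fun h => hx (by rwa [← ZMod.val_eq_zero])
      have h2 : x.val < p := ZMod.val_lt x
      omega
    · intro a ha
      simp only [Finset.mem_Icc] at ha
      exact ZMod.val_natCast_of_lt (by omega)
    · intro x hx
      simp [ZMod.natCast_val, ZMod.cast_id]
    · intro a ha
      rw [cast_eq]
  have hfield : ∑ x ∈ (Finset.univ.erase (0 : ZMod p)), ((4 : ZMod p) * x ^ 2)⁻¹ = 0 := by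
    have h4 : ∀ x : ZMod p, ((4 : ZMod p) * x ^ 2)⁻¹ = (4 : ZMod p)⁻¹ * (x⁻¹) ^ 2 := by
      intro x; rw [mul_inv, inv_pow]
    simp only [h4, ← Finset.mul_sum]
    have hinv : ∑ x ∈ Finset.univ.erase (0 : ZMod p), (x⁻¹) ^ 2
        = ∑ x ∈ Finset.univ.erase (0 : ZMod p), x ^ 2 := by
      apply Finset.sum_nbij' (fun x => x⁻¹) (fun x => x⁻¹)
      · intro a ha
        simp only [Finset.mem_erase, Finset.mem_univ, and_true] at ha ⊢
        exact inv_ne_zero ha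
      · intro a ha
        simp only [Finset.mem_erase, Finset.mem_univ, and_true] at ha ⊢
        exact inv_ne_zero ha
      · intro a _; exact inv_inv a
      · intro a _; exact inv_inv a
      · intro a _; rfl
    rw [hinv]
    have hall : ∑ x : ZMod p, x ^ 2 = 0 := by
      apply FiniteField.sum_pow_lt_card_sub_one
      rw [ZMod.card]; omega
    have hsplit := Finset.add_sum_erase Finset.univ (fun x : ZMod p => x ^ 2)
      (Finset.mem_univ (0 : ZMod p))
    rw [hall] at hsplit
    have hz : ∑ x ∈ Finset.univ.erase (0 : ZMod p), x ^ 2 = 0 := by simpa using hsplit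
    rw [hz, mul_zero]
  have h2ne : (2 : ZMod p) ≠ 0 := by
    have : ((2 : ℕ) : ZMod p) ≠ 0 := by
      rw [Ne, ZMod.natCast_eq_zero_iff]
      intro hdvd
      have := Nat.le_of_dvd (by omega) hdvd
      omega
    simpa using this
  apply mul_left_cancel₀ h2ne
  rw [← split, tofield, mul_zero]
  exact hfield

lemma sum_inv_norm_le (p : ℕ) [hp : Fact p.Prime] (hp5 : 5 ≤ p) :
    ‖∑ j ∈ Finset.Icc 1 ((p - 1) / 2), (((4 * j ^ 2 : ℕ) : ℚ_[p]))⁻¹‖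
      ≤ (p : ℝ) ^ (-1 : ℤ) := by
  have hunit : ∀ j ∈ Finset.Icc 1 ((p - 1) / 2), IsUnit ((4 * j ^ 2 : ℕ) : ℤ_[p]) := by
    intro j hj
    simp only [Finset.mem_Icc] at hj
    rw [PadicInt.isUnit_iff]
    have hnd : ¬ (p : ℤ) ∣ ((4 * j ^ 2 : ℕ) : ℤ) := by
      rw [Int.natCast_dvd_natCast]
      intro hdvd
      rcases (Nat.Prime.dvd_mul hp.out).mp hdvd with h | h
      · have := Nat.le_of_dvd (by norm_num) h; omega
      · have := Nat.Prime.dvd_of_dvd_pow hp.out h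
        have := Nat.le_of_dvd (by omega) this
        omega
    have h1 : ‖((4 * j ^ 2 : ℕ) : ℤ_[p])‖ ≤ 1 := PadicInt.norm_le_one _
    have h2 : ¬ ‖((4 * j ^ 2 : ℕ) : ℤ_[p])‖ < 1 := by
      rw [PadicInt.norm_def]
      have : (((4 * j ^ 2 : ℕ) : ℤ_[p]) : ℚ_[p]) = (((4 * j ^ 2 : ℕ) : ℤ) : ℚ_[p]) := by
        norm_cast
      rw [this, Padic.norm_intCast_lt_one_iff]
      exact hnd
    linarith
  set T : ℤ_[p] := ∑ j ∈ Finset.Icc 1 ((p - 1) / 2), Ring.inverse ((4 * j ^ 2 : ℕ) : ℤ_[p])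
    with hT
  have hcoe : (T : ℚ_[p]) = ∑ j ∈ Finset.Icc 1 ((p - 1) / 2), (((4 * j ^ 2 : ℕ) : ℚ_[p]))⁻¹ := by
    rw [hT]
    show (PadicInt.Coe.ringHom (p := p)) (∑ j ∈ Finset.Icc 1 ((p - 1) / 2),
      Ring.inverse ((4 * j ^ 2 : ℕ) : ℤ_[p])) = _
    rw [map_sum]
    apply Finset.sum_congr rfl
    intro j hj
    have hmul := Ring.mul_inverse_cancel _ (hunit j hj)
    have hmap := congrArg (PadicInt.Coe.ringHom (p := p)) hmul
    rw [map_mul, map_one, map_natCast] at hmap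
    rw [mul_comm] at hmap
    exact eq_inv_of_mul_eq_one_left hmap
  have hker : PadicInt.toZMod T = 0 := by
    rw [hT, map_sum]
    have : ∀ j ∈ Finset.Icc 1 ((p - 1) / 2),
        PadicInt.toZMod (Ring.inverse ((4 * j ^ 2 : ℕ) : ℤ_[p]))
          = (((4 * j ^ 2 : ℕ) : ZMod p))⁻¹ := by
      intro j hj
      obtain ⟨u, hu⟩ := hunit j hj
      rw [← hu, Ring.inverse_unit]
      have h1 : PadicInt.toZMod ((u : ℤ_[p])) * PadicInt.toZMod ((u⁻¹ : ℤ_[p]ˣ) : ℤ_[p]) = 1 := by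
        rw [← map_mul, Units.mul_inv, map_one]
      have h2 : PadicInt.toZMod ((u⁻¹ : ℤ_[p]ˣ) : ℤ_[p]) = (PadicInt.toZMod ((u : ℤ_[p])))⁻¹ :=
        eq_inv_of_mul_eq_one_left (by rw [mul_comm] at h1; exact h1)
      rw [h2, hu]
      congr 1
      rw [map_natCast]
    rw [Finset.sum_congr rfl this]
    exact zmod_sq_inv_sum p hp5
  have hmem : T ∈ (Ideal.span {(p : ℤ_[p]) ^ 1} : Ideal ℤ_[p]) := by
    rw [pow_one, ← PadicInt.maximalIdeal_eq_span_p, ← PadicInt.ker_toZMod]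
    exact hker
  have hnorm : ‖T‖ ≤ (p : ℝ) ^ (-(1 : ℕ) : ℤ) := (PadicInt.norm_le_pow_iff_mem_span_pow T 1).mpr hmem
  rw [← hcoe]
  have : ‖(T : ℚ_[p])‖ = ‖T‖ := PadicInt.padic_norm_e_of_padicInt T
  rw [this]
  simpa using hnorm

lemma prod_one_add_sub (p : ℕ) [hp : Fact p.Prime] {ε : ℝ} (hε0 : 0 ≤ ε) (hε1 : ε ≤ 1)
    {s : Finset ℕ} {f : ℕ → ℚ_[p]} (h : ∀ j ∈ s, ‖f j‖ ≤ ε) :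
    ‖(∏ j ∈ s, (1 + f j)) - (1 + ∑ j ∈ s, f j)‖ ≤ ε ^ 2 := by
  induction s using Finset.cons_induction with
  | empty => simpa using (by positivity : (0:ℝ) ≤ ε ^ 2)
  | cons i t hi ih =>
    have ih' := ih (fun j hj => h j (Finset.mem_cons_of_mem hj))
    have hfi : ‖f i‖ ≤ ε := h i (Finset.mem_cons_self i t)
    have hsum : ‖∑ j ∈ t, f j‖ ≤ ε :=
      IsUltrametricDist.norm_sum_le_of_forall_le_of_nonneg hε0
        (fun j hj => h j (Finset.mem_cons_of_mem hj))
    rw [Finset.prod_cons, Finset.sum_cons]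
    have key : (1 + f i) * ∏ j ∈ t, (1 + f j) - (1 + (f i + ∑ j ∈ t, f j))
        = ((∏ j ∈ t, (1 + f j)) - (1 + ∑ j ∈ t, f j))
          + (f i * ∑ j ∈ t, f j
            + f i * ((∏ j ∈ t, (1 + f j)) - (1 + ∑ j ∈ t, f j))) := by ring
    rw [key]
    refine le_trans (Padic.nonarchimedean _ _) (max_le ih' ?_)
    refine le_trans (Padic.nonarchimedean _ _) (max_le ?_ ?_)
    · rw [norm_mul, pow_two]
      exact mul_le_mul hfi hsum (norm_nonneg _) hε0
    · rw [norm_mul]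
      have : ‖f i‖ * ‖(∏ j ∈ t, (1 + f j)) - (1 + ∑ j ∈ t, f j)‖ ≤ ε * ε ^ 2 :=
        mul_le_mul hfi ih' (norm_nonneg _) hε0
      nlinarith [norm_nonneg (f i)]

theorem prod_congr_one_mod_p_cubed (p : ℕ) [hp : Fact p.Prime] (hp5 : 5 ≤ p) :
    ‖(∏ j ∈ Finset.Icc 1 ((p - 1) / 2), (1 - (p : ℚ_[p]) ^ 2 / (4 * (j : ℚ_[p]) ^ 2))) - 1‖
      ≤ (p : ℝ) ^ (-3 : ℤ) := by
  have hp0 : (0:ℝ) < p := by positivity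
  have hp1 : (1:ℝ) ≤ p := by exact_mod_cast (by omega : 1 ≤ p)
  set m := (p - 1) / 2 with hm
  set f : ℕ → ℚ_[p] := fun j => -((p : ℚ_[p]) ^ 2 * (((4 * j ^ 2 : ℕ) : ℚ_[p]))⁻¹) with hf
  have hn1 : ∀ j ∈ Finset.Icc 1 m, ‖(((4 * j ^ 2 : ℕ) : ℚ_[p]))‖ = 1 := by
    intro j hj
    simp only [Finset.mem_Icc] at hj
    have hnd : ¬ (p : ℤ) ∣ ((4 * j ^ 2 : ℕ) : ℤ) := by
      rw [Int.natCast_dvd_natCast]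
      intro hdvd
      rcases (Nat.Prime.dvd_mul hp.out).mp hdvd with h | h
      · have := Nat.le_of_dvd (by norm_num) h; omega
      · have := Nat.Prime.dvd_of_dvd_pow hp.out h
        have := Nat.le_of_dvd (by omega) this
        omega
    have hcast : (((4 * j ^ 2 : ℕ) : ℚ_[p])) = (((4 * j ^ 2 : ℕ) : ℤ) : ℚ_[p]) := by
      norm_cast
    rw [hcast]
    have h1 : ‖(((4 * j ^ 2 : ℕ) : ℤ) : ℚ_[p])‖ ≤ 1 := Padic.norm_int_le_one _
    have h2 : ¬ ‖(((4 * j ^ 2 : ℕ) : ℤ) : ℚ_[p])‖ < 1 := by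
      rw [Padic.norm_intCast_lt_one_iff]; exact hnd
    linarith
  have hfactor : ∀ j ∈ Finset.Icc 1 m,
      1 - (p : ℚ_[p]) ^ 2 / (4 * (j : ℚ_[p]) ^ 2) = 1 + f j := by
    intro j hj
    rw [hf]
    rw [div_eq_mul_inv]
    push_cast
    ring
  rw [Finset.prod_congr rfl hfactor]
  have hεnorm : ∀ j ∈ Finset.Icc 1 m, ‖f j‖ ≤ (p : ℝ) ^ (-2 : ℤ) := by
    intro j hj
    rw [hf]
    simp only [norm_neg, norm_mul, norm_pow, norm_inv, Padic.norm_p, hn1 j hj]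
    rw [inv_one, mul_one]
    rw [show ((p:ℝ)⁻¹) ^ 2 = (p : ℝ) ^ (-2 : ℤ) by
      rw [← zpow_natCast ((p:ℝ)⁻¹) 2, inv_zpow, ← zpow_neg]; norm_num]
  have hε0 : (0:ℝ) ≤ (p : ℝ) ^ (-2 : ℤ) := by positivity
  have hε1 : (p : ℝ) ^ (-2 : ℤ) ≤ 1 := by
    calc (p : ℝ) ^ (-2 : ℤ) ≤ (p : ℝ) ^ (0 : ℤ) := zpow_le_zpow_right₀ hp1 (by norm_num)
    _ = 1 := zpow_zero _
  have hkey := prod_one_add_sub p hε0 hε1 hεnorm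
  have hsumnorm : ‖∑ j ∈ Finset.Icc 1 m, f j‖ ≤ (p : ℝ) ^ (-3 : ℤ) := by
    have heq : ∑ j ∈ Finset.Icc 1 m, f j
        = -((p : ℚ_[p]) ^ 2 * ∑ j ∈ Finset.Icc 1 m, (((4 * j ^ 2 : ℕ) : ℚ_[p]))⁻¹) := by
      rw [hf, Finset.mul_sum]
      rw [← Finset.sum_neg_distrib]
    rw [heq, norm_neg, norm_mul, norm_pow, Padic.norm_p]
    have := sum_inv_norm_le p hp5
    calc ((p:ℝ)⁻¹) ^ 2 * ‖∑ j ∈ Finset.Icc 1 m, (((4 * j ^ 2 : ℕ) : ℚ_[p]))⁻¹‖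
        ≤ ((p:ℝ)⁻¹) ^ 2 * (p : ℝ) ^ (-1 : ℤ) := by
          apply mul_le_mul_of_nonneg_left this (by positivity)
      _ = (p : ℝ) ^ (-3 : ℤ) := by
          rw [show ((p:ℝ)⁻¹) ^ 2 = (p : ℝ) ^ (-2 : ℤ) by
            rw [← zpow_natCast ((p:ℝ)⁻¹) 2, inv_zpow, ← zpow_neg]; norm_num]
          rw [← zpow_add₀ hp0.ne']
          norm_num
  have hdecomp : (∏ j ∈ Finset.Icc 1 m, (1 + f j)) - 1
      = ((∏ j ∈ Finset.Icc 1 m, (1 + f j)) - (1 + ∑ j ∈ Finset.Icc 1 m, f j))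
        + ∑ j ∈ Finset.Icc 1 m, f j := by ring
  rw [hdecomp]
  refine le_trans (Padic.nonarchimedean _ _) (max_le ?_ hsumnorm)
  calc ‖(∏ j ∈ Finset.Icc 1 m, (1 + f j)) - (1 + ∑ j ∈ Finset.Icc 1 m, f j)‖
      ≤ ((p : ℝ) ^ (-2 : ℤ)) ^ 2 := hkey
    _ = (p : ℝ) ^ (-4 : ℤ) := by
        rw [← zpow_natCast ((p:ℝ) ^ (-2:ℤ)) 2, ← zpow_mul]; norm_num
    _ ≤ (p : ℝ) ^ (-3 : ℤ) := zpow_le_zpow_right₀ hp1 (by norm_num)
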